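/- Let g : ℕ → ℂ be a nonzero truncated divisor sum, i.e., its Eratosthenes transform g' has finite support with D := max(supp(g')). Define the Wintner coefficients ĝ(q) := ∑_{d ≤ D, q ∣ d} g'(d)/d for each q ≥ 1. Then for all a ≥ 1, g(a) = ∑_{q ≤ D} ĝ(q) c_q(a), a finite Ramanujan expansion of fixed length D. -/

import Mathlib

open Finset

/-- The Eratosthenes transform `g' = μ * g`. -/
noncomputable def eratosthenes (g : ℕ → ℂ) (d : ℕ) : ℂ :=
  ∑ t ∈ d.divisors, g t * (ArithmeticFunction.moebius (d / t) : ℂ)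

/-- The Ramanujan sum `c_q(a) = ∑_{j mod q, gcd(j,q)=1} e^{2πi j a / q}`. -/
noncomputable def ramanujanSum (q a : ℕ) : ℂ :=
  ∑ j ∈ (Finset.range q).filter (fun j => Nat.Coprime j q),
    Complex.exp (2 * Real.pi * Complex.I * j * a / q)

/-- The Wintner coefficient `ĝ(q) = ∑_{d ≤ D, q ∣ d} g'(d)/d`. -/
noncomputable def wintner (g : ℕ → ℂ) (D q : ℕ) : ℂ :=
  ∑ d ∈ (Finset.Icc 1 D).filter (fun d => q ∣ d), eratosthenes g d / d

/-- Sum of `d`-th roots of unity raised to power `a`. -/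
lemma exp_range_sum (d a : ℕ) (hd : 0 < d) :
    ∑ k ∈ Finset.range d, Complex.exp (2 * Real.pi * Complex.I * k * a / d)
      = if d ∣ a then (d : ℂ) else 0 := by
  have hd0 : (d : ℂ) ≠ 0 := Nat.cast_ne_zero.mpr hd.ne'
  set z : ℂ := Complex.exp (2 * Real.pi * Complex.I * a / d) with hz
  have hpow : ∀ k : ℕ, Complex.exp (2 * Real.pi * Complex.I * k * a / d) = z ^ k := by
    intro k
    rw [hz, ← Complex.exp_nat_mul]
    congr 1
    ring
  rw [Finset.sum_congr rfl fun k _ => hpow k]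
  by_cases h : d ∣ a
  · obtain ⟨m, rfl⟩ := h
    have hz1 : z = 1 := by
      rw [hz]
      have harg : 2 * (Real.pi : ℂ) * Complex.I * (↑(d * m)) / d
          = (m : ℤ) * (2 * Real.pi * Complex.I) := by
        push_cast
        field_simp
      rw [harg, Complex.exp_int_mul_two_pi_mul_I]
    simp [hz1]
  · have hz1 : z ≠ 1 := by
      intro hzz
      rw [hz, Complex.exp_eq_one_iff] at hzz
      obtain ⟨n, hn⟩ := hzz
      apply h
      have hπ : (Real.pi : ℂ) ≠ 0 := by
        exact_mod_cast Real.pi_ne_zero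
      have h2 : (2 : ℂ) * Real.pi * Complex.I ≠ 0 := by
        simp [hπ, Complex.I_ne_zero]
      have hac : (a : ℂ) = (n : ℂ) * d := by
        field_simp at hn
        apply mul_left_cancel₀ h2
        linear_combination (2 * Real.pi * Complex.I) * hn
      have haz : (a : ℤ) = n * d := by exact_mod_cast hac
      exact Int.natCast_dvd_natCast.mp ⟨n, by rw [haz, mul_comm]⟩
    have hzd : z ^ d = 1 := by
      rw [hz, ← Complex.exp_nat_mul]
      have harg : (d : ℂ) * (2 * Real.pi * Complex.I * a / d)
          = (a : ℤ) * (2 * Real.pi * Complex.I) := by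
        push_cast
        field_simp
      rw [harg, Complex.exp_int_mul_two_pi_mul_I]
    rw [if_neg h, geom_sum_eq hz1, hzd]
    simp

/-- Partition of the roots of unity sum according to `gcd`. -/
lemma sum_ramanujan_divisors (d a : ℕ) (hd : 0 < d) :
    ∑ q ∈ d.divisors, ramanujanSum q a = if d ∣ a then (d : ℂ) else 0 := by
  rw [← Nat.sum_div_divisors d (fun q => ramanujanSum q a), ← exp_range_sum d a hd,
    ← Finset.sum_fiberwise_of_maps_to (g := fun k => Nat.gcd k d) (t := d.divisors)
      (fun k _ => Nat.mem_divisors.mpr ⟨Nat.gcd_dvd_right k d, hd.ne'⟩)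
      (fun k => Complex.exp (2 * Real.pi * Complex.I * k * a / d))]
  refine Finset.sum_congr rfl fun e he => ?_
  obtain ⟨hed, -⟩ := Nat.mem_divisors.mp he
  have he0 : 0 < e := Nat.pos_of_dvd_of_pos hed hd
  have hq0 : 0 < d / e := Nat.div_pos (Nat.le_of_dvd hd hed) he0
  have hqe : d / e * e = d := Nat.div_mul_cancel hed
  unfold ramanujanSum
  refine Finset.sum_nbij' (fun j => j * e) (fun k => k / e) ?_ ?_ ?_ ?_ ?_
  · intro j hj
    obtain ⟨hjq, hjcop⟩ := Finset.mem_filter.mp hj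
    rw [Finset.mem_range] at hjq
    refine Finset.mem_filter.mpr ⟨Finset.mem_range.mpr ?_, ?_⟩
    · calc j * e < d / e * e := (Nat.mul_lt_mul_right he0).mpr hjq
        _ = d := hqe
    · rw [← hqe, Nat.gcd_mul_right, hjcop, one_mul]
  · intro k hk
    obtain ⟨hkd, hke⟩ := Finset.mem_filter.mp hk
    rw [Finset.mem_range] at hkd
    refine Finset.mem_filter.mpr ⟨Finset.mem_range.mpr ?_, ?_⟩
    · exact Nat.div_lt_div_of_lt_of_dvd hed hkd
    · have hg : 0 < Nat.gcd k d := by rw [hke]; exact he0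
      have := Nat.coprime_div_gcd_div_gcd hg
      rwa [hke] at this
  · intro j hj
    exact Nat.mul_div_cancel j he0
  · intro k hk
    obtain ⟨-, hke⟩ := Finset.mem_filter.mp hk
    exact Nat.div_mul_cancel (hke ▸ Nat.gcd_dvd_left k d)
  · intro j hj
    congr 1
    have hdc : (d : ℂ) = (d / e : ℕ) * e := by exact_mod_cast hqe.symm
    have he' : (e : ℂ) ≠ 0 := Nat.cast_ne_zero.mpr he0.ne'
    have hq' : ((d / e : ℕ) : ℂ) ≠ 0 := Nat.cast_ne_zero.mpr hq0.ne'
    rw [hdc]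
    push_cast
    field_simp

/-- Finite Ramanujan expansion of a nonzero truncated divisor sum. -/
theorem stmt_3 (g : ℕ → ℂ) (D : ℕ)
    (hD : ∀ d, eratosthenes g d ≠ 0 → d ≤ D)
    (hDmax : eratosthenes g D ≠ 0) :
    ∀ a : ℕ, 1 ≤ a → g a = ∑ q ∈ Finset.Icc 1 D, wintner g D q * ramanujanSum q a := by
  have hmob : ∀ n > 0, ∑ i ∈ n.divisors, eratosthenes g i = g n := by
    rw [ArithmeticFunction.sum_eq_iff_sum_mul_moebius_eq]
    intro n hn
    rw [Nat.sum_divisorsAntidiagonal' (f := fun x y => (ArithmeticFunction.moebius x : ℂ) * g y)]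
    unfold eratosthenes
    exact Finset.sum_congr rfl fun t _ => mul_comm _ _
  intro a ha
  have ha0 : a ≠ 0 := by omega
  symm
  calc ∑ q ∈ Finset.Icc 1 D, wintner g D q * ramanujanSum q a
      = ∑ q ∈ Finset.Icc 1 D, ∑ d ∈ Finset.Icc 1 D,
          if q ∣ d then eratosthenes g d / d * ramanujanSum q a else 0 := by
        refine Finset.sum_congr rfl fun q _ => ?_
        rw [wintner, Finset.sum_mul, Finset.sum_filter]
    _ = ∑ d ∈ Finset.Icc 1 D, ∑ q ∈ Finset.Icc 1 D,
          if q ∣ d then eratosthenes g d / d * ramanujanSum q a else 0 := Finset.sum_comm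
    _ = ∑ d ∈ Finset.Icc 1 D, if d ∣ a then eratosthenes g d else 0 := by
        refine Finset.sum_congr rfl fun d hd => ?_
        obtain ⟨hd1, hdD⟩ := Finset.mem_Icc.mp hd
        have hset : (Finset.Icc 1 D).filter (fun q => q ∣ d) = d.divisors := by
          ext q
          simp only [Finset.mem_filter, Finset.mem_Icc, Nat.mem_divisors]
          constructor
          · rintro ⟨_, hqd⟩; exact ⟨hqd, by omega⟩
          · rintro ⟨hqd, -⟩
            have hq1 : 1 ≤ q := Nat.pos_of_dvd_of_pos hqd (by omega)
            exact ⟨⟨hq1, le_trans (Nat.le_of_dvd (by omega) hqd) hdD⟩, hqd⟩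
        rw [← Finset.sum_filter, hset, ← Finset.mul_sum,
          sum_ramanujan_divisors d a (by omega)]
        have hdc : (d : ℂ) ≠ 0 := Nat.cast_ne_zero.mpr (by omega)
        split_ifs with h
        · exact div_mul_cancel₀ _ hdc
        · exact mul_zero _
    _ = ∑ d ∈ (Finset.Icc 1 D).filter (fun d => d ∣ a), eratosthenes g d :=
        (Finset.sum_filter _ _).symm
    _ = ∑ d ∈ a.divisors.filter (fun d => d ≤ D), eratosthenes g d := by
        congr 1
        ext q
        simp only [Finset.mem_filter, Finset.mem_Icc, Nat.mem_divisors]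
        constructor
        · rintro ⟨⟨-, h2⟩, h3⟩
          exact ⟨⟨h3, ha0⟩, h2⟩
        · rintro ⟨⟨h1, -⟩, h2⟩
          exact ⟨⟨Nat.pos_of_dvd_of_pos h1 (Nat.pos_of_ne_zero ha0), h2⟩, h1⟩
    _ = ∑ d ∈ a.divisors, eratosthenes g d :=
        Finset.sum_filter_of_ne (fun d _ hne => hD d hne)
    _ = g a := hmob a (by omega)
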